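/- Let X_1, …, X_T be i.i.d. samples from μ and let Z_1, …, Z_T be i.i.d. real random variables, independent of the X_i, whose common law is supported on [0, b−a] with density bounded below by κ_p > 0 on [0, b−a]. Let ω > 0 and β > 0 satisfy 0 < β·(ω/T)^{1/(d_s+1)} ≤ min(1, b−a). Then the probability that (T/ω)^{1/(d_s+1)}·min_{1≤i≤T}{ (f* − f(X_i))/(L·Θ) + Z_i } > β is at most (1 − (κ_s·κ_p/(d_s+1))·β^{d_s+1}·ω/T)^T. -/

import Mathlib

open MeasureTheory ProbabilityTheory Real

/-- **Finite-sample bound for noisy random search.**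
Let `(X i, Z i)`, `1 ≤ i ≤ T`, be i.i.d. pairs with `X i ~ μ`, `Z i` independent of
`X i` with a density supported on `[0, b-a]` bounded below by `κp` there. If
`0 < β (ω/T)^{1/(ds+1)} ≤ min 1 (b-a)`, then
`ℙ ((T/ω)^{1/(ds+1)} min_i ((f* - f (X i))/(L Θ) + Z i) > β)
  ≤ (1 - (κs κp/(ds+1)) β^{ds+1} ω / T)^T`. -/
theorem noisy_random_search_finite_sample_bound
    {𝒳 : Type*} [MetricSpace 𝒳] [CompactSpace 𝒳] [MeasurableSpace 𝒳] [BorelSpace 𝒳]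
    (μ : Measure 𝒳) [IsProbabilityMeasure μ]
    (f : 𝒳 → ℝ) (L : ℝ) (hL : 0 ≤ L) (hf : LipschitzWith L.toNNReal f)
    (fstar fmin Θ : ℝ)
    (hfstar : fstar = ⨆ x, f x) (hfmin : fmin = ⨅ x, f x)
    (hΘ : Θ = Metric.diam (Set.univ : Set 𝒳))
    (ds κs : ℝ) (hds : 0 < ds) (hκs : κs ∈ Set.Ioc (0 : ℝ) 1)
    (hscatter : ∀ α ∈ Set.Ioc (0 : ℝ) 1,
      μ {x | f x < fstar - α * (fstar - fmin)} ≤ ENNReal.ofReal (1 - κs * α ^ ds))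
    (a b : ℝ) (hab : a < b) (κp : ℝ) (hκp : 0 < κp)
    (g : ℝ → ENNReal) (hg : Measurable g)
    (hsupp : ∀ x ∉ Set.Icc (0 : ℝ) (b - a), g x = 0)
    (hlb : ∀ x ∈ Set.Icc (0 : ℝ) (b - a), ENNReal.ofReal κp ≤ g x)
    {Ω : Type*} [MeasurableSpace Ω] (P : Measure Ω) [IsProbabilityMeasure P]
    (T : ℕ) (hT : 0 < T)
    (X : Fin T → Ω → 𝒳) (Z : Fin T → Ω → ℝ)
    (hXmeas : ∀ i, Measurable (X i)) (hZmeas : ∀ i, Measurable (Z i))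
    (hiid : iIndepFun (fun i ω => (X i ω, Z i ω)) P)
    (hlaw : ∀ i, Measure.map (fun ω => (X i ω, Z i ω)) P
      = μ.prod (volume.withDensity g))
    (W : ℝ) (hW : 0 < W) (β : ℝ) (hβ0 : 0 < β)
    (hβ : β * (W / T) ^ ((1 : ℝ) / (ds + 1)) ≤ min 1 (b - a)) :
    P {ω | ((T : ℝ) / W) ^ ((1 : ℝ) / (ds + 1)) *
        (⨅ i, ((fstar - f (X i ω)) / (L * Θ) + Z i ω)) > β}
      ≤ ENNReal.ofReal ((1 - κs * κp / (ds + 1) * β ^ (ds + 1) * W / T) ^ T) := by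
  -- basic setup
  rcases isEmpty_or_nonempty 𝒳 with hE | hne
  · exfalso
    have h1 : μ Set.univ = 1 := measure_univ
    rw [Set.univ_eq_empty_iff.2 hE] at h1
    simp at h1
  have hT0 : (0:ℝ) < T := by exact_mod_cast hT
  have hds1 : (0:ℝ) < ds + 1 := by linarith
  have hds1' : ds + 1 ≠ 0 := ne_of_gt hds1
  have hWT : (0:ℝ) < W / T := div_pos hW hT0
  set p : ℝ := (1:ℝ)/(ds+1) with hp
  set t : ℝ := β * (W / T) ^ p with htdef
  have ht0 : 0 < t := mul_pos hβ0 (Real.rpow_pos_of_pos hWT p)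
  have ht1 : t ≤ 1 := le_trans hβ (min_le_left _ _)
  have htba : t ≤ b - a := le_trans hβ (min_le_right _ _)
  have hfc : Continuous f := hf.continuous
  have hbdd : BddAbove (Set.range f) := (isCompact_range hfc).bddAbove
  have hbddb : BddBelow (Set.range f) := (isCompact_range hfc).bddBelow
  have hfle : ∀ x, f x ≤ fstar := by
    intro x; rw [hfstar]; exact le_ciSup hbdd x
  have hΘ0 : 0 ≤ Θ := hΘ ▸ Metric.diam_nonneg
  have hLΘ0 : 0 ≤ L * Θ := mul_nonneg hL hΘ0
  have hgap : fstar - fmin ≤ L * Θ := by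
    have key : ∀ x y : 𝒳, f x - f y ≤ L * Θ := by
      intro x y
      have h1 := hf.dist_le_mul x y
      have h2 : dist x y ≤ Θ := by
        rw [hΘ]
        exact Metric.dist_le_diam_of_mem (Metric.isBounded_of_compactSpace)
          (Set.mem_univ x) (Set.mem_univ y)
      have h3 : f x - f y ≤ dist (f x) (f y) := by
        rw [Real.dist_eq]; exact le_abs_self _
      calc f x - f y ≤ L.toNNReal * dist x y := le_trans h3 h1
        _ ≤ L * Θ := by
            rw [Real.coe_toNNReal L hL]
            exact mul_le_mul_of_nonneg_left h2 hL
    have h4 : fstar ≤ fmin + L * Θ := by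
      rw [hfstar]
      apply ciSup_le
      intro x
      have h5 : fmin ≥ f x - L * Θ := by
        rw [hfmin]
        apply le_ciInf
        intro y
        linarith [key x y]
      linarith
    linarith
  -- scattering consequence
  have hsc' : ∀ α ∈ Set.Ioc (0:ℝ) 1,
      ENNReal.ofReal (κs * α ^ ds) ≤ μ {x | (fstar - f x) / (L * Θ) ≤ α} := by
    intro α hα
    obtain ⟨hα0, hα1⟩ := hα
    have hAm : MeasurableSet {x | f x < fstar - α * (fstar - fmin)} :=
      measurableSet_lt hfc.measurable measurable_const
    have hcompl : μ {x | f x < fstar - α * (fstar - fmin)}ᶜ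
        = 1 - μ {x | f x < fstar - α * (fstar - fmin)} := by
      rw [measure_compl hAm (measure_ne_top _ _), measure_univ]
    have hsub : {x | f x < fstar - α * (fstar - fmin)}ᶜ
        ⊆ {x | (fstar - f x) / (L * Θ) ≤ α} := by
      intro x hx
      simp only [Set.mem_compl_iff, Set.mem_setOf_eq, not_lt] at hx
      simp only [Set.mem_setOf_eq]
      rcases eq_or_lt_of_le hLΘ0 with h0 | hpos
      · rw [← h0, div_zero]; exact hα0.le
      · rw [div_le_iff₀ hpos]
        have : α * (fstar - fmin) ≤ α * (L * Θ) :=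
          mul_le_mul_of_nonneg_left hgap hα0.le
        linarith
    have hle1 : κs * α ^ ds ≤ 1 := by
      have h1 : α ^ ds ≤ 1 := Real.rpow_le_one hα0.le hα1 hds.le
      calc κs * α ^ ds ≤ 1 * 1 := mul_le_mul hκs.2 h1 (by positivity) zero_le_one
        _ = 1 := one_mul 1
    calc ENNReal.ofReal (κs * α ^ ds)
        = 1 - ENNReal.ofReal (1 - κs * α ^ ds) := by
          rw [← ENNReal.ofReal_one, ← ENNReal.ofReal_sub _ (by linarith [hle1, Real.rpow_nonneg hα0.le ds, mul_nonneg hκs.1.le (Real.rpow_nonneg hα0.le ds)] : (0:ℝ) ≤ 1 - κs * α ^ ds)]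
          · norm_num
      _ ≤ 1 - μ {x | f x < fstar - α * (fstar - fmin)} :=
          tsub_le_tsub_left (hscatter α ⟨hα0, hα1⟩) 1
      _ = μ {x | f x < fstar - α * (fstar - fmin)}ᶜ := hcompl.symm
      _ ≤ μ {x | (fstar - f x) / (L * Θ) ≤ α} := measure_mono hsub

  -- the product law and the key set
  set ν : Measure ℝ := volume.withDensity g with hν
  have hi0 : Fin T := ⟨0, hT⟩
  have hprodP : IsProbabilityMeasure (μ.prod ν) := by
    have := Measure.isProbabilityMeasure_map
      (μ := P) (f := fun ω => (X hi0 ω, Z hi0 ω))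
      ((hXmeas hi0).prodMk (hZmeas hi0)).aemeasurable
    rwa [hlaw hi0] at this
  have hhm : Measurable (fun x : 𝒳 => (fstar - f x) / (L * Θ)) :=
    ((measurable_const.sub hfc.measurable)).div_const _
  set S : Set (𝒳 × ℝ) := {q | t < (fstar - f q.1) / (L * Θ) + q.2} with hSdef
  have hSm : MeasurableSet S :=
    measurableSet_lt measurable_const ((hhm.comp measurable_fst).add measurable_snd)
  set q : ENNReal := (μ.prod ν) S with hq
  -- lower bound on the complement measure
  set c : ℝ := κs * κp / (ds + 1) * β ^ (ds + 1) * W / T with hc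
  have htpow : t ^ (ds + 1) = β ^ (ds + 1) * (W / T) := by
    rw [htdef, Real.mul_rpow hβ0.le (Real.rpow_nonneg hWT.le _),
      ← Real.rpow_mul hWT.le, hp, one_div_mul_cancel hds1', Real.rpow_one]
  have hceq : c = κp * κs * (t ^ (ds + 1)) / (ds + 1) := by
    rw [hc, htpow]; ring
  have hc0 : 0 ≤ c := by
    rw [hceq]
    have h1 := Real.rpow_nonneg ht0.le (ds + 1)
    have h2 : 0 ≤ κp * κs * t ^ (ds + 1) := mul_nonneg (mul_nonneg hκp.le hκs.1.le) h1
    exact div_nonneg h2 hds1.le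

  have hcompl_lb : ENNReal.ofReal c ≤ (μ.prod ν) Sᶜ := by
    set S' : Set (ℝ × 𝒳) := {r | (fstar - f r.2) / (L * Θ) + r.1 ≤ t} with hS'def
    have hS'm : MeasurableSet S' :=
      measurableSet_le ((hhm.comp measurable_snd).add measurable_fst) measurable_const
    have hswap : Sᶜ = Prod.swap ⁻¹' S' := by
      ext q; simp [hSdef, hS'def, Prod.swap, not_lt]
    have h1 : (μ.prod ν) Sᶜ = (ν.prod μ) S' := by
      rw [hswap, ← Measure.map_apply measurable_swap hS'm, Measure.prod_swap]
    set F : ℝ → ENNReal := fun z => μ (Prod.mk z ⁻¹' S') with hF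
    have hFm : Measurable F := measurable_measure_prodMk_left hS'm
    have h2 : (ν.prod μ) S' = ∫⁻ z, g z * F z ∂volume := by
      rw [Measure.prod_apply hS'm, hν,
        lintegral_withDensity_eq_lintegral_mul volume hg hFm]
      rfl
    set φ : ℝ → ℝ := fun z => κp * (κs * (t - z) ^ ds) with hφ
    have hφc : Continuous φ :=
      continuous_const.mul (continuous_const.mul
        ((continuous_const.sub continuous_id).rpow_const (fun z => Or.inr hds.le)))
    have hφint : IntegrableOn φ (Set.Ioo 0 t) volume :=
      (hφc.integrableOn_Icc).mono_set Set.Ioo_subset_Icc_self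
    have hφnn : 0 ≤ᵐ[volume.restrict (Set.Ioo 0 t)] φ := by
      apply ae_restrict_of_forall_mem measurableSet_Ioo
      intro z hz
      have : (0:ℝ) ≤ (t - z) ^ ds := Real.rpow_nonneg (by linarith [hz.2]) ds
      have := mul_nonneg hκs.1.le this
      exact mul_nonneg hκp.le this
    have hreal : ∫ z in Set.Ioo (0:ℝ) t, φ z = κp * κs * (t ^ (ds + 1) / (ds + 1)) := by
      have hI : ∫ z in Set.Ioo (0:ℝ) t, (t - z) ^ ds = t ^ (ds + 1) / (ds + 1) := by
        rw [← integral_Ioc_eq_integral_Ioo, ← intervalIntegral.integral_of_le ht0.le,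
          intervalIntegral.integral_comp_sub_left (fun u => u ^ ds) t]
        simp only [sub_self, sub_zero]
        rw [integral_rpow (Or.inl (by linarith))]
        rw [Real.zero_rpow (by positivity)]
        ring
      rw [hφ]
      simp only
      rw [MeasureTheory.integral_const_mul, MeasureTheory.integral_const_mul, hI]
      ring
    calc ENNReal.ofReal c = ENNReal.ofReal (∫ z in Set.Ioo (0:ℝ) t, φ z) := by
          rw [hreal, hceq]; ring_nf
      _ = ∫⁻ z in Set.Ioo (0:ℝ) t, ENNReal.ofReal (φ z) ∂volume :=
          ofReal_integral_eq_lintegral_ofReal hφint hφnn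
      _ ≤ ∫⁻ z in Set.Ioo (0:ℝ) t, g z * F z ∂volume := by
          apply setLIntegral_mono (hg.mul hFm)
          intro z hz
          have hz0 : 0 < z := hz.1
          have hzt : z < t := hz.2
          have hαmem : t - z ∈ Set.Ioc (0:ℝ) 1 := ⟨by linarith, by linarith⟩
          have hgz : ENNReal.ofReal κp ≤ g z :=
            hlb z ⟨hz0.le, by linarith⟩
          have hFz : ENNReal.ofReal (κs * (t - z) ^ ds) ≤ F z := by
            refine le_trans (hsc' (t - z) hαmem) (measure_mono ?_)
            intro x hx
            simp only [Set.mem_setOf_eq] at hx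
            simp only [hF, hS'def, Set.mem_preimage, Set.mem_setOf_eq]
            linarith
          calc ENNReal.ofReal (φ z)
              = ENNReal.ofReal κp * ENNReal.ofReal (κs * (t - z) ^ ds) := by
                rw [hφ, ← ENNReal.ofReal_mul hκp.le]
            _ ≤ g z * F z := mul_le_mul' hgz hFz
      _ ≤ ∫⁻ z, g z * F z ∂volume := setLIntegral_le_lintegral _ _
      _ = (ν.prod μ) S' := h2.symm
      _ = (μ.prod ν) Sᶜ := h1.symm

  -- c ≤ 1 and q ≤ ofReal (1 - c)
  have hc1 : c ≤ 1 := by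
    have h1 : ENNReal.ofReal c ≤ 1 := le_trans hcompl_lb prob_le_one
    exact ENNReal.ofReal_le_one.mp h1
  have hScompl : (μ.prod ν) Sᶜ = 1 - q := by
    rw [measure_compl hSm (measure_ne_top _ _), measure_univ, hq]
  have hqle : q ≤ ENNReal.ofReal (1 - c) := by
    have h1 : ENNReal.ofReal c ≤ 1 - q := hScompl ▸ hcompl_lb
    have h2 : q = 1 - (1 - q) :=
      (ENNReal.sub_sub_cancel ENNReal.one_ne_top prob_le_one).symm
    calc q = 1 - (1 - q) := h2
      _ ≤ 1 - ENNReal.ofReal c := tsub_le_tsub_left h1 1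
      _ = ENNReal.ofReal (1 - c) := by
          rw [ENNReal.ofReal_sub 1 hc0, ENNReal.ofReal_one]
  -- event inclusion
  set C : ℝ := ((T:ℝ)/W) ^ p with hC
  have hC0 : 0 < C := Real.rpow_pos_of_pos (div_pos hT0 hW) p
  have hCt : C * t = β := by
    have h1 : C * (W / T) ^ p = 1 := by
      rw [hC, ← Real.mul_rpow (by positivity) (by positivity)]
      rw [show ((T:ℝ)/W) * (W/T) = 1 by field_simp]
      exact Real.one_rpow p
    rw [htdef]
    calc C * (β * (W / ↑T) ^ p) = β * (C * (W / ↑T) ^ p) := by ring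
      _ = β := by rw [h1, mul_one]
  have hsub : {ω | C * (⨅ i, ((fstar - f (X i ω)) / (L * Θ) + Z i ω)) > β}
      ⊆ ⋂ i, (fun ω => (X i ω, Z i ω)) ⁻¹' S := by
    intro ω hω
    simp only [Set.mem_setOf_eq, gt_iff_lt] at hω
    have hinf : t < ⨅ i, ((fstar - f (X i ω)) / (L * Θ) + Z i ω) := by
      have := hω
      rw [← hCt] at this
      exact lt_of_mul_lt_mul_left this hC0.le
    simp only [Set.mem_iInter, Set.mem_preimage, hSdef, Set.mem_setOf_eq]
    intro i
    refine lt_of_lt_of_le hinf ?_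
    exact ciInf_le (Set.Finite.bddBelow (Set.finite_range _)) i
  -- independence
  have hind := hiid.measure_inter_preimage_eq_mul Finset.univ
    (sets := fun _ => S) (fun i _ => hSm)
  have huniv : (⋂ i ∈ Finset.univ, (fun ω => (X i ω, Z i ω)) ⁻¹' S)
      = ⋂ i, (fun ω => (X i ω, Z i ω)) ⁻¹' S := by simp
  have hfac : ∀ i : Fin T, P ((fun ω => (X i ω, Z i ω)) ⁻¹' S) = q := by
    intro i
    rw [← Measure.map_apply ((hXmeas i).prodMk (hZmeas i)) hSm, hlaw i, hq]
  have hPinter : P (⋂ i, (fun ω => (X i ω, Z i ω)) ⁻¹' S) = q ^ T := by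
    rw [← huniv, hind]
    simp only [hfac]
    rw [Finset.prod_const, Finset.card_univ, Fintype.card_fin]
  calc P {ω | C * (⨅ i, ((fstar - f (X i ω)) / (L * Θ) + Z i ω)) > β}
      ≤ P (⋂ i, (fun ω => (X i ω, Z i ω)) ⁻¹' S) := measure_mono hsub
    _ = q ^ T := hPinter
    _ ≤ (ENNReal.ofReal (1 - c)) ^ T := pow_le_pow_left₀ (zero_le (a := q)) hqle T
    _ = ENNReal.ofReal ((1 - c) ^ T) := (ENNReal.ofReal_pow (by linarith) T).symm
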